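/- (Necessity direction, lower privacy.) In a finite single-player perception game where the decision maker has lower privacy concerns, if ∩_t M(t) = ∅ (no action is potentially optimal at the extremes for all types), then there is no fully pooling perception equilibrium: for every pure action a and every consistent perception τ supporting all types playing a, some type has a strictly profitable deviation. -/
import Mathlib


open Finset

section PerceptionGame
variable {T A : Type*} [Fintype T] [Fintype A]

/-- Total probability of action `a` under prior `β` and strategy `σ`. -/
def actProb (β : T → ℝ) (σ : T → A → ℝ) (a : A) : ℝ := ∑ t, β t * σ t a

/-- Bayesian consistency of a perception with the prior and strategy. -/
def Consistent (β : T → ℝ) (σ : T → A → ℝ) (τ : T → A → T → ℝ) : Prop :=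
  ∀ a, 0 < actProb β σ a → ∀ t tb, τ t a tb = β tb * σ tb a / actProb β σ a

/-- Expected utility of type `t` playing mixed action `s`, given perception `τ`. -/
def ExpUtil (u : T → A → (T → ℝ) → ℝ) (τ : T → A → T → ℝ) (t : T) (s : A → ℝ) : ℝ :=
  ∑ a, s a * u t a (τ t a)

/-- Perception equilibrium: a consistent strategy–perception pair where
every type's strategy is a best reply. -/
def PerceptionEqm (β : T → ℝ) (u : T → A → (T → ℝ) → ℝ)
    (σ : T → A → ℝ) (τ : T → A → T → ℝ) : Prop :=
  (∀ t, σ t ∈ stdSimplex ℝ A) ∧ (∀ t a, τ t a ∈ stdSimplex ℝ T) ∧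
  Consistent β σ τ ∧
  ∀ t, ∀ s ∈ stdSimplex ℝ A, ExpUtil u τ t s ≤ ExpUtil u τ t (σ t)

end PerceptionGame

section Privacy
variable {T A : Type*} [Fintype T] [Fintype A] [DecidableEq T] [DecidableEq A]

/-- Dirac (point-mass) measure on a type. -/
def dirac (t : T) : T → ℝ := fun s => if s = t then 1 else 0

/-- Upper privacy concerns: the prior is an optimal perception for every type and action. -/
def UpperPrivacy (β : T → ℝ) (u : T → A → (T → ℝ) → ℝ) : Prop :=
  ∀ t a, ∀ μ ∈ stdSimplex ℝ T, u t a μ ≤ u t a β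

/-- Lower privacy concerns: full revelation is a worst perception for every type and action. -/
def LowerPrivacy (u : T → A → (T → ℝ) → ℝ) : Prop :=
  ∀ t a, ∀ μ ∈ stdSimplex ℝ T, u t a (dirac t) ≤ u t a μ

/-- `a ∈ L(t)`: `a` is potentially optimal for type `t`. -/
def PotOpt (u : T → A → (T → ℝ) → ℝ) (t : T) (a : A) : Prop :=
  ∀ a', ∃ μ ∈ stdSimplex ℝ T, ∃ μ' ∈ stdSimplex ℝ T, u t a' μ' ≤ u t a μ

/-- `a ∈ M(t)`: `a` is potentially optimal at the extremes for type `t`. -/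
def PotOptExt (β : T → ℝ) (u : T → A → (T → ℝ) → ℝ) (t : T) (a : A) : Prop :=
  ∀ a', u t a' (dirac t) ≤ u t a β

end Privacy

/-- necessity, lower privacy: if `⋂ₜ M(t) = ∅` then no fully
pooling perception equilibrium exists: for every pure pooled action and every
consistent perception supporting it, some type has a strictly profitable
deviation. -/
theorem no_pooling_necessity_lower
    {T A : Type*} [Fintype T] [Fintype A] [DecidableEq T] [DecidableEq A]
    (β : T → ℝ) (hβ : β ∈ stdSimplex ℝ T)
    (u : T → A → (T → ℝ) → ℝ) (hlow : LowerPrivacy u)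
    (hM : ∀ a : A, ∃ t, ¬ PotOptExt β u t a) :
    ∀ (a : A) (τ : T → A → T → ℝ),
      (∀ t a', τ t a' ∈ stdSimplex ℝ T) →
      Consistent β (fun _ a' => if a' = a then 1 else 0) τ →
      ∃ t a', u t a β < u t a' (τ t a') := by
  intro a τ hτ _
  obtain ⟨t, ht⟩ := hM a
  simp only [PotOptExt, not_forall, not_le] at ht
  obtain ⟨a', ha'⟩ := ht
  exact ⟨t, a', lt_of_lt_of_le ha' (hlow t a' (τ t a') (hτ t a'))⟩
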